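/- (Hölder inequality for the pan-integral) Let (X, 𝒜, μ) be a monotone measure space with μ subadditive, E ∈ 𝒜, and let p, q > 1 satisfy 1/p + 1/q = 1. If f, g : E → ℝ are measurable with ‖f‖_{μ,p} < ∞ and ‖g‖_{μ,q} < ∞, then ‖f g‖_{μ,1} ≤ ‖f‖_{μ,p} ‖g‖_{μ,q}, i.e. ∫_E^pan |f g| dμ ≤ (∫_E^pan |f|^p dμ)^{1/p} (∫_E^pan |g|^q dμ)^{1/q}. -/

import Mathlib

open Set Filter
open scoped ENNReal NNReal Topology

variable {X : Type*}

/-- A monotone measure: vanishes on the empty set, positive on the whole space,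
and monotone on measurable sets. -/
structure MonotoneMeasure [MeasurableSpace X] (mu : Set X → ℝ≥0∞) : Prop where
  empty : mu ∅ = 0
  univ_pos : 0 < mu Set.univ
  mono : ∀ ⦃A B : Set X⦄, MeasurableSet A → MeasurableSet B → A ⊆ B → mu A ≤ mu B

/-- A finite measurable partition of `X`. -/
def IsPanPartition [MeasurableSpace X] {n : ℕ} (A : Fin n → Set X) : Prop :=
  (∀ i, MeasurableSet (A i)) ∧ Pairwise (Function.onFun Disjoint A) ∧ (⋃ i, A i) = Set.univ

/-- The `(+,·)`-based pan-integral of a nonnegative function on `X`. -/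
noncomputable def panIntegral [MeasurableSpace X] (mu : Set X → ℝ≥0∞) (f : X → ℝ≥0∞) : ℝ≥0∞ :=
  ⨆ (n : ℕ) (A : Fin n → Set X) (_ : IsPanPartition A) (lam : Fin n → ℝ≥0)
    (_ : ∀ x, ∑ i, Set.indicator (A i) (fun _ => (lam i : ℝ≥0∞)) x ≤ f x),
    ∑ i, (lam i : ℝ≥0∞) * mu (A i)

/-- The pan-integral of `f` on a set `A`, i.e. the pan-integral of `f·χ_A` on `X`. -/
noncomputable def panIntegralOn [MeasurableSpace X] (mu : Set X → ℝ≥0∞) (f : X → ℝ≥0∞)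
    (A : Set X) : ℝ≥0∞ :=
  panIntegral mu (A.indicator f)

/-- Subadditivity of a set function. -/
def PanSubadditive [MeasurableSpace X] (mu : Set X → ℝ≥0∞) : Prop :=
  ∀ ⦃A B : Set X⦄, MeasurableSet A → MeasurableSet B → mu (A ∪ B) ≤ mu A + mu B

/-- Null-additivity of a set function. -/
def PanNullAdditive [MeasurableSpace X] (mu : Set X → ℝ≥0∞) : Prop :=
  ∀ ⦃A B : Set X⦄, MeasurableSet A → MeasurableSet B → mu B = 0 → mu (A ∪ B) = mu A

/-- Continuity from below of a set function. -/
def PanContinuousFromBelow [MeasurableSpace X] (mu : Set X → ℝ≥0∞) : Prop :=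
  ∀ E : ℕ → Set X, (∀ n, MeasurableSet (E n)) → Monotone E →
    Filter.Tendsto (fun n => mu (E n)) Filter.atTop (nhds (mu (⋃ n, E n)))

/-- A real-valued function is pan-integrable if the pan-integrals of its
positive and negative parts are both finite. -/
def PanIntegrable [MeasurableSpace X] (mu : Set X → ℝ≥0∞) (f : X → ℝ) : Prop :=
  panIntegral mu (fun x => ENNReal.ofReal (f x)) < ⊤ ∧
    panIntegral mu (fun x => ENNReal.ofReal (-f x)) < ⊤

/-- The symmetric pan-integral of a real-valued function:
`∫ f⁺ dμ − ∫ f⁻ dμ`. -/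
noncomputable def panIntegralReal [MeasurableSpace X] (mu : Set X → ℝ≥0∞) (f : X → ℝ) : ℝ :=
  (panIntegral mu (fun x => ENNReal.ofReal (f x))).toReal -
    (panIntegral mu (fun x => ENNReal.ofReal (-f x))).toReal

/-- The `‖·‖_{μ,p}` functional: `(∫_E^pan |f|^p dμ)^(1/p)`. -/
noncomputable def panNorm [MeasurableSpace X] (mu : Set X → ℝ≥0∞) (E : Set X) (p : ℝ)
    (f : X → ℝ) : ℝ≥0∞ :=
  (panIntegralOn mu (fun x => ENNReal.ofReal (|f x| ^ p)) E) ^ (1 / p)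

section helpers
variable [MeasurableSpace X] {mu : Set X → ℝ≥0∞}

/-- generic lower bound for the pan-integral from a partition indexed by any fintype -/
lemma le_panIntegral {ι : Type} [Fintype ι] (f : X → ℝ≥0∞) (A : ι → Set X)
    (hmeas : ∀ i, MeasurableSet (A i)) (hdisj : Pairwise (Function.onFun Disjoint A))
    (hcover : (⋃ i, A i) = Set.univ) (lam : ι → ℝ≥0)
    (hle : ∀ x, ∑ i, Set.indicator (A i) (fun _ => (lam i : ℝ≥0∞)) x ≤ f x) :
    ∑ i, (lam i : ℝ≥0∞) * mu (A i) ≤ panIntegral mu f := by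
  classical
  let e := (Fintype.equivFin ι).symm
  have key : ∑ i : Fin (Fintype.card ι), ((lam (e i) : ℝ≥0∞)) * mu (A (e i)) ≤ panIntegral mu f := by
    apply le_iSup_of_le (Fintype.card ι)
    apply le_iSup_of_le (fun i => A (e i))
    have hpart : IsPanPartition (fun i => A (e i)) := by
      refine ⟨fun i => hmeas _, ?_, ?_⟩
      · intro i j hij
        exact hdisj (fun h => hij (e.injective h))
      · rw [← hcover]
        exact e.surjective.iUnion_comp (fun i => A i)
    apply le_iSup_of_le hpart
    apply le_iSup_of_le (fun i => lam (e i))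
    refine le_iSup_of_le (fun x => ?_) le_rfl
    rw [Equiv.sum_comp e (fun i => Set.indicator (A i) (fun _ => (lam i : ℝ≥0∞)) x)]
    exact hle x
  rwa [Equiv.sum_comp e (fun i => (lam i : ℝ≥0∞) * mu (A i))] at key

lemma panIntegral_le {f : X → ℝ≥0∞} {T : ℝ≥0∞}
    (h : ∀ (n : ℕ) (A : Fin n → Set X), IsPanPartition A → ∀ lam : Fin n → ℝ≥0,
      (∀ x, ∑ i, Set.indicator (A i) (fun _ => (lam i : ℝ≥0∞)) x ≤ f x) →
      ∑ i, (lam i : ℝ≥0∞) * mu (A i) ≤ T) :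
    panIntegral mu f ≤ T := by
  refine iSup_le fun n => iSup_le fun A => iSup_le fun hA => iSup_le fun lam => iSup_le fun hle => ?_
  exact h n A hA lam hle

lemma panIntegral_mono {f g : X → ℝ≥0∞} (h : ∀ x, f x ≤ g x) :
    panIntegral mu f ≤ panIntegral mu g := by
  refine panIntegral_le fun n A hA lam hle => ?_
  exact le_panIntegral g A hA.1 hA.2.1 hA.2.2 lam (fun x => (hle x).trans (h x))

lemma panIntegral_smul_le {f : X → ℝ≥0∞} {c : ℝ≥0} (hc : c ≠ 0) :
    panIntegral mu (fun x => (c : ℝ≥0∞) * f x) ≤ (c : ℝ≥0∞) * panIntegral mu f := by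
  refine panIntegral_le fun n A hA lam hle => ?_
  have hle' : ∀ x, ∑ i, Set.indicator (A i) (fun _ => ((lam i / c : ℝ≥0) : ℝ≥0∞)) x ≤ f x := by
    intro x
    have h1 : ∑ i, Set.indicator (A i) (fun _ => ((lam i / c : ℝ≥0) : ℝ≥0∞)) x
        = (∑ i, Set.indicator (A i) (fun _ => ((lam i : ℝ≥0∞))) x) * (c : ℝ≥0∞)⁻¹ := by
      rw [Finset.sum_mul]
      refine Finset.sum_congr rfl fun i _ => ?_
      by_cases hx : x ∈ A i <;>
        simp [Set.indicator_of_mem, Set.indicator_of_notMem, hx, div_eq_mul_inv,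
          ENNReal.coe_mul, ENNReal.coe_inv hc]
    rw [h1]
    have h2 := (hle x)
    calc (∑ i, Set.indicator (A i) (fun _ => ((lam i : ℝ≥0∞))) x) * (c : ℝ≥0∞)⁻¹
        ≤ ((c : ℝ≥0∞) * f x) * (c : ℝ≥0∞)⁻¹ := by gcongr
      _ = f x := by
          rw [mul_comm (c : ℝ≥0∞) (f x), mul_assoc,
            ENNReal.mul_inv_cancel (by exact_mod_cast hc) ENNReal.coe_ne_top, mul_one]
  have := le_panIntegral (mu := mu) f A hA.1 hA.2.1 hA.2.2 (fun i => lam i / c) hle'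
  calc ∑ i, (lam i : ℝ≥0∞) * mu (A i)
      = (c : ℝ≥0∞) * ∑ i, ((lam i / c : ℝ≥0) : ℝ≥0∞) * mu (A i) := by
        rw [Finset.mul_sum]
        refine Finset.sum_congr rfl fun i _ => ?_
        rw [← mul_assoc, ← ENNReal.coe_mul, mul_div_cancel₀ _ hc]
    _ ≤ (c : ℝ≥0∞) * panIntegral mu f := by gcongr

lemma sum_indicator_of_mem {ι : Type*} [Fintype ι] {A : ι → Set X}
    (hdisj : Pairwise (Function.onFun Disjoint A)) {j : ι} {x : X} (hx : x ∈ A j)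
    (c : ι → ℝ≥0∞) :
    ∑ i, Set.indicator (A i) (fun _ => c i) x = c j := by
  rw [Finset.sum_eq_single j]
  · exact Set.indicator_of_mem hx _
  · intro i _ hij
    have : x ∉ A i := fun hxi => (Set.disjoint_left.mp (hdisj hij)) hxi hx
    exact Set.indicator_of_notMem this _
  · simp

lemma mu_biUnion_le (hmu : MonotoneMeasure mu) (hsub : PanSubadditive mu)
    {ι : Type*} (s : Finset ι) (S : ι → Set X) (h : ∀ i, MeasurableSet (S i)) :
    mu (⋃ i ∈ s, S i) ≤ ∑ i ∈ s, mu (S i) := by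
  classical
  induction s using Finset.cons_induction with
  | empty => simp [hmu.empty]
  | cons a s ha ih =>
    have hU : (⋃ i ∈ Finset.cons a s ha, S i) = S a ∪ ⋃ i ∈ s, S i := by
      simp [Finset.cons_eq_insert, Set.biUnion_insert]
    rw [hU, Finset.sum_cons]
    refine le_trans (hsub (h a) (.biUnion (s.countable_toSet) (fun i _ => h i))) ?_
    gcongr
end helpers

section subadd
variable [MeasurableSpace X] {mu : Set X → ℝ≥0∞}

lemma panIntegral_add_le (hmu : MonotoneMeasure mu) (hsub : PanSubadditive mu)
    {u v : X → ℝ≥0∞} (hu : Measurable u) :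
    panIntegral mu (fun x => u x + v x) ≤ panIntegral mu u + panIntegral mu v := by
  classical
  refine panIntegral_le fun n A hA lam hle => ?_
  set S := ∑ i, (lam i : ℝ≥0∞) * mu (A i) with hSdef
  set T := panIntegral mu u + panIntegral mu v with hTdef
  have key : ∀ m : ℕ, 1 ≤ m → (1 - 1/(m : ℝ≥0∞)) * S ≤ T := by
    intro m hm
    have hm0 : (m : ℝ≥0) ≠ 0 := Nat.cast_ne_zero.mpr (by omega)
    -- the coefficient function
    set c : ℕ → ℝ≥0 := fun k => (k : ℝ≥0) / (m : ℝ≥0) with hcdef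
    have hc_mono : Monotone c := fun a b hab => by
      simp only [hcdef]; gcongr <;> exact_mod_cast hab
    have hc_m : c m = 1 := by simp only [hcdef]; exact div_self hm0
    -- the refined partition
    set D : Fin n → Fin (m+1) → Set X := fun i k =>
      if (k : ℕ) = m then {x | (lam i : ℝ≥0∞) ≤ u x}
      else {x | ((c k * lam i : ℝ≥0) : ℝ≥0∞) ≤ u x ∧
        u x < ((c ((k : ℕ)+1) * lam i : ℝ≥0) : ℝ≥0∞)} with hDdef
    set C : Fin n × Fin (m+1) → Set X := fun j => A j.1 ∩ D j.1 j.2 with hCdef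
    have hCsub : ∀ j, C j ⊆ A j.1 := fun j => Set.inter_subset_left
    have hD_last : ∀ (i : Fin n) (k : Fin (m+1)), (k : ℕ) = m → ∀ x : X,
        x ∈ D i k ↔ (lam i : ℝ≥0∞) ≤ u x := by
      intro i k hk x
      simp only [hDdef, if_pos hk, Set.mem_setOf_eq]
    have hD_lt : ∀ (i : Fin n) (k : Fin (m+1)), (k : ℕ) ≠ m → ∀ x : X,
        x ∈ D i k ↔ ((c (k : ℕ) * lam i : ℝ≥0) : ℝ≥0∞) ≤ u x ∧
          u x < ((c ((k : ℕ)+1) * lam i : ℝ≥0) : ℝ≥0∞) := by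
      intro i k hk x
      simp only [hDdef, if_neg hk, Set.mem_setOf_eq]
    have hDmeas : ∀ i k, MeasurableSet (D i k) := by
      intro i k
      by_cases hk : (k : ℕ) = m
      · have : D i k = u ⁻¹' (Set.Ici (lam i : ℝ≥0∞)) := by
          ext x; rw [hD_last i k hk x]; rfl
        rw [this]; exact hu measurableSet_Ici
      · have : D i k = u ⁻¹' (Set.Ico ((c (k : ℕ) * lam i : ℝ≥0) : ℝ≥0∞)
            ((c ((k : ℕ)+1) * lam i : ℝ≥0) : ℝ≥0∞)) := by
          ext x; rw [hD_lt i k hk x]; rfl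
        rw [this]; exact hu measurableSet_Ico
    have hCmeas : ∀ j, MeasurableSet (C j) := fun j => (hA.1 j.1).inter (hDmeas j.1 j.2)
    -- disjointness of the D's over k (for fixed i)
    have hDdisj : ∀ (i : Fin n) (k k' : Fin (m+1)), (k : ℕ) < (k' : ℕ) →
        ∀ x, x ∈ D i k → x ∈ D i k' → False := by
      intro i k k' hkk' x hxk hxk'
      have hkm : (k : ℕ) < m := lt_of_lt_of_le hkk' (Nat.lt_succ_iff.mp k'.2)
      have hupper : u x < ((c ((k : ℕ)+1) * lam i : ℝ≥0) : ℝ≥0∞) := by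
        have hne : ¬ ((k : ℕ) = m) := by omega
        exact ((hD_lt i k hne x).mp hxk).2
      by_cases hk'm : (k' : ℕ) = m
      · have hlow : (lam i : ℝ≥0∞) ≤ u x := (hD_last i k' hk'm x).mp hxk'
        have : ((c ((k : ℕ)+1) * lam i : ℝ≥0) : ℝ≥0∞) ≤ (lam i : ℝ≥0∞) := by
          have h1 : c ((k : ℕ)+1) ≤ 1 := by
            rw [← hc_m]; exact hc_mono (by omega)
          exact_mod_cast mul_le_of_le_one_left (zero_le) h1
        exact absurd (lt_of_lt_of_le hupper (le_trans this hlow)) (lt_irrefl _)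
      · have hlow : ((c (k' : ℕ) * lam i : ℝ≥0) : ℝ≥0∞) ≤ u x :=
          ((hD_lt i k' hk'm x).mp hxk').1
        have hcc : c ((k : ℕ)+1) ≤ c (k' : ℕ) := hc_mono (by omega)
        have : ((c ((k : ℕ)+1) * lam i : ℝ≥0) : ℝ≥0∞) ≤ u x := by
          refine le_trans ?_ hlow
          exact_mod_cast mul_le_mul_left hcc _
        exact absurd (lt_of_lt_of_le hupper this) (lt_irrefl _)
    have hCdisj : Pairwise (Function.onFun Disjoint C) := by
      intro j j' hjj'
      rw [Function.onFun, Set.disjoint_left]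
      intro x hx hx'
      by_cases hi : j.1 = j'.1
      · have hk : (j.2 : ℕ) ≠ (j'.2 : ℕ) := by
          intro h
          exact hjj' (Prod.ext hi (Fin.ext h))
        rcases lt_or_gt_of_ne hk with h | h
        · exact hDdisj j.1 j.2 j'.2 h x hx.2 (hi ▸ hx'.2)
        · exact hDdisj j.1 j'.2 j.2 h x (hi ▸ hx'.2) hx.2
      · exact Set.disjoint_left.mp (hA.2.1 hi) hx.1 hx'.1
    -- each A i is covered by the C (i, k)
    have hAcov : ∀ (i : Fin n) (x : X), x ∈ A i → ∃ k : Fin (m+1), x ∈ D i k := by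
      intro i x hx
      by_cases h : (lam i : ℝ≥0∞) ≤ u x
      · exact ⟨Fin.last m, (hD_last i (Fin.last m) (Fin.val_last m) x).mpr h⟩
      · push_neg at h
        have hlam0 : lam i ≠ 0 := by
          intro h0
          rw [h0] at h
          exact absurd (zero_le : 0 ≤ u x) (by simpa using h)
        have hux_top : u x ≠ ⊤ := ne_top_of_lt (lt_of_lt_of_le h le_top)
        set r : ℝ≥0 := (u x).toNNReal with hrdef
        have hur : u x = (r : ℝ≥0∞) := (ENNReal.coe_toNNReal hux_top).symm
        have hrl : r < lam i := by
          rw [hur] at h; exact_mod_cast h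
        set k : ℕ := Nat.floor ((m : ℝ≥0) * r / lam i) with hkdef
        have hk1 : (k : ℝ≥0) ≤ (m : ℝ≥0) * r / lam i := Nat.floor_le zero_le
        have hk2 : (m : ℝ≥0) * r / lam i < (k : ℝ≥0) + 1 := Nat.lt_floor_add_one _
        have hkm : k < m := by
          have : (m : ℝ≥0) * r / lam i < (m : ℝ≥0) := by
            rw [div_lt_iff₀ (pos_iff_ne_zero.mpr hlam0)]
            exact mul_lt_mul_of_pos_left hrl (by positivity)
          exact_mod_cast lt_of_le_of_lt hk1 this
        refine ⟨⟨k, by omega⟩, (hD_lt i ⟨k, by omega⟩ (by simpa using Nat.ne_of_lt hkm) x).mpr ?_⟩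
        constructor
        · rw [hur]
          have : c k * lam i ≤ r := by
            simp only [hcdef]
            rw [div_mul_eq_mul_div, div_le_iff₀ (pos_iff_ne_zero.mpr hm0)]
            calc (k : ℝ≥0) * lam i ≤ ((m : ℝ≥0) * r / lam i) * lam i := by gcongr
              _ = (m : ℝ≥0) * r := div_mul_cancel₀ _ hlam0
              _ = r * m := mul_comm _ _
          exact_mod_cast this
        · rw [hur]
          have : r < c (k+1) * lam i := by
            simp only [hcdef]
            rw [div_mul_eq_mul_div, lt_div_iff₀ (pos_iff_ne_zero.mpr hm0)]
            have h1 : (m : ℝ≥0) * r < ((k : ℝ≥0) + 1) * lam i := by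
              rw [← div_lt_iff₀ (pos_iff_ne_zero.mpr hlam0)] at *
              · exact hk2
            calc r * m = (m : ℝ≥0) * r := mul_comm _ _
              _ < ((k : ℝ≥0) + 1) * lam i := h1
              _ = ((k+1 : ℕ) : ℝ≥0) * lam i := by push_cast; ring
          exact_mod_cast this
    have hAsub : ∀ i : Fin n, A i ⊆ ⋃ k : Fin (m+1), C (i, k) := by
      intro i x hx
      obtain ⟨k, hk⟩ := hAcov i x hx
      exact Set.mem_iUnion.mpr ⟨k, hx, hk⟩
    have hCcov : (⋃ j, C j) = Set.univ := by
      apply Set.eq_univ_of_univ_subset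
      rw [← hA.2.2]
      intro x hx
      obtain ⟨i, hi⟩ := Set.mem_iUnion.mp hx
      obtain ⟨k, hk⟩ := hAcov i x hi
      exact Set.mem_iUnion.mpr ⟨(i, k), hi, hk⟩
    -- the two simple functions
    set lam1 : Fin n × Fin (m+1) → ℝ≥0 := fun j => c (j.2 : ℕ) * lam j.1 with hlam1def
    set lam2 : Fin n × Fin (m+1) → ℝ≥0 := fun j => c (m - 1 - (j.2 : ℕ)) * lam j.1 with hlam2def
    have hble1 : ∀ x, ∑ j, Set.indicator (C j) (fun _ => (lam1 j : ℝ≥0∞)) x ≤ u x := by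
      intro x
      by_cases hx : ∃ j, x ∈ C j
      · obtain ⟨⟨i, k⟩, hj⟩ := hx
        rw [sum_indicator_of_mem hCdisj hj]
        by_cases hkm : (k : ℕ) = m
        · have h2 := (hD_last i k hkm x).mp hj.2
          have : (lam1 (i, k) : ℝ≥0) = lam i := by
            simp only [hlam1def, hkm, hc_m, one_mul]
          rw [this]
          exact h2
        · exact ((hD_lt i k hkm x).mp hj.2).1
      · push_neg at hx
        rw [Finset.sum_eq_zero fun j _ => Set.indicator_of_notMem (hx j) _]
        exact zero_le
    have hble2 : ∀ x, ∑ j, Set.indicator (C j) (fun _ => (lam2 j : ℝ≥0∞)) x ≤ v x := by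
      intro x
      by_cases hx : ∃ j, x ∈ C j
      · obtain ⟨⟨i, k⟩, hj⟩ := hx
        rw [sum_indicator_of_mem hCdisj hj]
        by_cases hkm : (k : ℕ) = m
        · have : (lam2 (i, k) : ℝ≥0) = 0 := by
            have h0 : m - 1 - (k : ℕ) = 0 := by omega
            simp only [hlam2def, h0, hcdef]
            simp
          rw [this]
          simp
        · -- k < m : use lam i ≤ u x + v x and u x < c (k+1) * lam i
          have hkm' : (k : ℕ) < m := by have := Nat.lt_succ_iff.mp k.2; omega
          have hup : u x < ((c ((k : ℕ)+1) * lam i : ℝ≥0) : ℝ≥0∞) :=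
            ((hD_lt i k hkm x).mp hj.2).2
          have hlami : (lam i : ℝ≥0∞) ≤ u x + v x := by
            have h1 := hle x
            rwa [sum_indicator_of_mem hA.2.1 hj.1] at h1
          by_contra hcon
          push_neg at hcon
          have hcon' : v x < ((c (m - 1 - (k : ℕ)) * lam i : ℝ≥0) : ℝ≥0∞) := by
            simpa only [hlam2def] using hcon
          have hsum : u x + v x < ((c ((k : ℕ)+1) * lam i : ℝ≥0) : ℝ≥0∞)
              + ((c (m - 1 - (k : ℕ)) * lam i : ℝ≥0) : ℝ≥0∞) :=
            ENNReal.add_lt_add hup hcon'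
          have heq : ((c ((k : ℕ)+1) * lam i : ℝ≥0) : ℝ≥0∞)
              + ((c (m - 1 - (k : ℕ)) * lam i : ℝ≥0) : ℝ≥0∞) = (lam i : ℝ≥0∞) := by
            rw [← ENNReal.coe_add]
            congr 1
            rw [← add_mul]
            have : c ((k : ℕ)+1) + c (m - 1 - (k : ℕ)) = 1 := by
              simp only [hcdef]
              rw [← add_div, div_eq_one_iff_eq hm0]
              have : ((k : ℕ)+1) + (m - 1 - (k : ℕ)) = m := by omega
              exact_mod_cast congrArg (Nat.cast : ℕ → ℝ≥0) this
            rw [this, one_mul]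
          rw [heq] at hsum
          exact absurd (lt_of_le_of_lt hlami hsum) (lt_irrefl _)
      · push_neg at hx
        rw [Finset.sum_eq_zero fun j _ => Set.indicator_of_notMem (hx j) _]
        exact zero_le
    have h1 : ∑ j, (lam1 j : ℝ≥0∞) * mu (C j) ≤ panIntegral mu u :=
      le_panIntegral (mu := mu) u C hCmeas hCdisj hCcov lam1 hble1
    have h2 : ∑ j, (lam2 j : ℝ≥0∞) * mu (C j) ≤ panIntegral mu v :=
      le_panIntegral (mu := mu) v C hCmeas hCdisj hCcov lam2 hble2
    -- lower bound for the sum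
    have hcoef : ∀ j : Fin n × Fin (m+1),
        ((c (m-1) * lam j.1 : ℝ≥0) : ℝ≥0∞) ≤ (lam1 j : ℝ≥0∞) + (lam2 j : ℝ≥0∞) := by
      intro j
      rw [← ENNReal.coe_add, ENNReal.coe_le_coe]
      simp only [hlam1def, hlam2def]
      rw [← add_mul]
      apply mul_le_mul_left
      by_cases hkm : (j.2 : ℕ) = m
      · rw [hkm, hc_m]
        have : c (m-1) ≤ 1 := by rw [← hc_m]; exact hc_mono (by omega)
        exact le_trans this (by simp [zero_le])
      · have hkm' : (j.2 : ℕ) < m := by have := Nat.lt_succ_iff.mp j.2.2; omega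
        have : c (j.2 : ℕ) + c (m - 1 - (j.2 : ℕ)) = c (m-1) := by
          simp only [hcdef]
          rw [← add_div]
          congr 1
          have : (j.2 : ℕ) + (m - 1 - (j.2 : ℕ)) = m - 1 := by omega
          exact_mod_cast congrArg (Nat.cast : ℕ → ℝ≥0) this
        exact le_of_eq this.symm
    have hmain : ((c (m-1) : ℝ≥0) : ℝ≥0∞) * S ≤ T := by
      calc ((c (m-1) : ℝ≥0) : ℝ≥0∞) * S
          = ∑ i, ((c (m-1) * lam i : ℝ≥0) : ℝ≥0∞) * mu (A i) := by
            rw [hSdef, Finset.mul_sum]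
            refine Finset.sum_congr rfl fun i _ => ?_
            rw [← mul_assoc, ← ENNReal.coe_mul]
        _ ≤ ∑ i, ((c (m-1) * lam i : ℝ≥0) : ℝ≥0∞) * ∑ k, mu (C (i, k)) := by
            gcongr with i _
            calc mu (A i) ≤ mu (⋃ k : Fin (m+1), C (i, k)) :=
                hmu.mono (hA.1 i) (MeasurableSet.iUnion fun k => hCmeas (i, k)) (hAsub i)
              _ ≤ ∑ k, mu (C (i, k)) := by
                  have := mu_biUnion_le hmu hsub (Finset.univ : Finset (Fin (m+1)))
                    (fun k => C (i, k)) (fun k => hCmeas (i, k))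
                  simpa using this
        _ = ∑ j : Fin n × Fin (m+1), ((c (m-1) * lam j.1 : ℝ≥0) : ℝ≥0∞) * mu (C j) := by
            rw [Fintype.sum_prod_type]
            exact Finset.sum_congr rfl fun i _ => by rw [Finset.mul_sum]
        _ ≤ ∑ j, ((lam1 j : ℝ≥0∞) + (lam2 j : ℝ≥0∞)) * mu (C j) := by
            gcongr with j _
            exact hcoef j
        _ = ∑ j, (lam1 j : ℝ≥0∞) * mu (C j) + ∑ j, (lam2 j : ℝ≥0∞) * mu (C j) := by
            rw [← Finset.sum_add_distrib]
            exact Finset.sum_congr rfl fun j _ => add_mul _ _ _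
        _ ≤ T := add_le_add h1 h2
    -- identify the coefficient
    have hcid : ((c (m-1) : ℝ≥0) : ℝ≥0∞) = 1 - 1/(m : ℝ≥0∞) := by
      simp only [hcdef]
      rw [ENNReal.coe_div hm0]
      push_cast
      have hmne : (m : ℝ≥0∞) ≠ 0 := Nat.cast_ne_zero.mpr (by omega)
      have hmtop : (m : ℝ≥0∞) ≠ ⊤ := ENNReal.natCast_ne_top m
      refine (ENNReal.eq_sub_of_add_eq (c := 1/(m:ℝ≥0∞)) ((ENNReal.div_lt_top ENNReal.one_ne_top hmne).ne) ?_)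
      rw [ENNReal.div_add_div_same,
        tsub_add_cancel_of_le (show (1:ℝ≥0∞) ≤ (m:ℝ≥0∞) from by exact_mod_cast hm),
        ENNReal.div_self hmne hmtop]
    rwa [hcid] at hmain
  -- pass to the limit m → ∞
  have hcoef_tendsto : Tendsto (fun m : ℕ => (1 - 1/(m : ℝ≥0∞)) * S) atTop (𝓝 (1 * S)) := by
    apply ENNReal.Tendsto.mul_const _ (Or.inl one_ne_zero)
    have h0 : Tendsto (fun m : ℕ => 1/(m : ℝ≥0∞)) atTop (𝓝 0) := by
      simpa [one_div] using ENNReal.tendsto_inv_nat_nhds_zero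
    simpa using ENNReal.Tendsto.sub tendsto_const_nhds h0 (Or.inl ENNReal.one_ne_top)
  rw [one_mul] at hcoef_tendsto
  refine le_of_tendsto hcoef_tendsto ?_
  filter_upwards [eventually_ge_atTop 1] with m hm using key m hm
end subadd

/-- Optimization step of Hölder: infimum of the Young bounds. -/
lemma holder_real_opt {p q : ℝ} (hp : 1 < p) (hq : 1 < q) (hpq : 1/p + 1/q = 1)
    {a b : ℝ} (ha : 0 ≤ a) (hb : 0 ≤ b) {ε : ℝ} (hε : 0 < ε) :
    ∃ t : ℝ, 0 < t ∧ t^p/p * a + t^(-q)/q * b ≤ a^(1/p) * b^(1/q) + ε := by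
  have hp0 : (0:ℝ) < p := by linarith
  have hq0 : (0:ℝ) < q := by linarith
  have hpne : p ≠ 0 := hp0.ne'
  have hqne : q ≠ 0 := hq0.ne'
  rcases eq_or_lt_of_le ha with ha0 | ha'
  · -- a = 0
    rcases eq_or_lt_of_le hb with hb0 | hb'
    · refine ⟨1, one_pos, ?_⟩
      rw [← ha0, ← hb0]
      have h3 : (0:ℝ) ≤ (0:ℝ) ^ (1/p) * (0:ℝ)^(1/q) := by positivity
      simp only [mul_zero, add_zero]
      linarith
    · -- a = 0 < b : take t large
      have hbne : b ≠ 0 := hb'.ne'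
      set t : ℝ := (b/(q*ε) + 1)^(1/q) with htdef
      have hbase : 0 < b/(q*ε) + 1 := by positivity
      have ht0 : 0 < t := Real.rpow_pos_of_pos hbase _
      refine ⟨t, ht0, ?_⟩
      have htq : t^q = b/(q*ε) + 1 := by
        rw [htdef, ← Real.rpow_mul hbase.le, one_div_mul_cancel hqne, Real.rpow_one]
      have h1 : t^(-q) ≤ (b/(q*ε))⁻¹ := by
        rw [Real.rpow_neg ht0.le, htq]
        have hd : 0 < b/(q*ε) := by positivity
        gcongr
        linarith
      have h1' : t^(-q) ≤ q*ε/b := by rwa [inv_div] at h1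
      have h2 : t^(-q)/q * b ≤ ε := by
        calc t^(-q)/q * b ≤ (q*ε/b)/q * b := by gcongr
          _ = ε := by field_simp
      rw [← ha0]
      have h3 : (0:ℝ) ≤ (0:ℝ) ^ (1/p) * b^(1/q) := by positivity
      simp only [mul_zero, zero_add]
      linarith
  · rcases eq_or_lt_of_le hb with hb0 | hb'
    · -- b = 0 < a : take t small
      have hane : a ≠ 0 := ha'.ne'
      set s : ℝ := a/(p*ε) + 1 with hsdef
      have hs0 : 0 < s := by positivity
      have hbase : 0 < 1/s := by positivity
      set t : ℝ := (1/s)^(1/p) with htdef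
      have ht0 : 0 < t := Real.rpow_pos_of_pos hbase _
      refine ⟨t, ht0, ?_⟩
      have htp : t^p = 1/s := by
        rw [htdef, ← Real.rpow_mul hbase.le, one_div_mul_cancel hpne, Real.rpow_one]
      have h1 : t^p ≤ p*ε/a := by
        rw [htp, div_le_div_iff₀ hs0 (by positivity)]
        have he : p*ε*(a/(p*ε)) = a := by field_simp
        rw [hsdef]
        nlinarith
      have h2 : t^p/p * a ≤ ε := by
        calc t^p/p * a ≤ (p*ε/a)/p * a := by gcongr
          _ = ε := by field_simp
      rw [← hb0]
      have h3 : (0:ℝ) ≤ a ^ (1/p) * (0:ℝ)^(1/q) := by positivity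
      simp only [mul_zero, add_zero]
      linarith
    · -- 0 < a, 0 < b : the optimal t
      have hr : (0:ℝ) < b/a := by positivity
      set t : ℝ := (b/a)^(1/(p*q)) with htdef
      have ht0 : 0 < t := Real.rpow_pos_of_pos hr _
      refine ⟨t, ht0, ?_⟩
      have haa : a^(1/p) * a^(1/q) = a := by
        rw [← Real.rpow_add ha', hpq, Real.rpow_one]
      have hbb : b^(1/p) * b^(1/q) = b := by
        rw [← Real.rpow_add hb', hpq, Real.rpow_one]
      have htp : t^p = (b/a)^(1/q) := by
        rw [htdef, ← Real.rpow_mul hr.le]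
        congr 1
        field_simp
      have htq : t^(-q) = (b/a)^(-(1/p)) := by
        rw [htdef, ← Real.rpow_mul hr.le]
        congr 1
        field_simp
      have key1 : (b/a)^(1/q) * a = a^(1/p) * b^(1/q) := by
        rw [Real.div_rpow hb ha, div_mul_eq_mul_div,
          div_eq_iff (ne_of_gt (Real.rpow_pos_of_pos ha' (1/q)))]
        linear_combination (-(b^(1/q))) * haa
      have key2 : (b/a)^(-(1/p)) * b = a^(1/p) * b^(1/q) := by
        rw [Real.rpow_neg (div_nonneg hb ha), Real.div_rpow hb ha, inv_div,
          div_mul_eq_mul_div, div_eq_iff (ne_of_gt (Real.rpow_pos_of_pos hb' (1/p)))]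
        linear_combination (-(a^(1/p))) * hbb
      have hsum : t^p/p * a + t^(-q)/q * b = a^(1/p) * b^(1/q) := by
        rw [htp, htq]
        calc (b/a)^(1/q)/p * a + (b/a)^(-(1/p))/q * b
            = ((b/a)^(1/q) * a) * (1/p) + ((b/a)^(-(1/p)) * b) * (1/q) := by ring
          _ = (a^(1/p) * b^(1/q)) * (1/p + 1/q) := by rw [key1, key2]; ring
          _ = a^(1/p) * b^(1/q) := by rw [hpq, mul_one]
      linarith [hsum]

set_option maxHeartbeats 400000 in
theorem panNorm_holder [MeasurableSpace X]
    (mu : Set X → ℝ≥0∞) (hmu : MonotoneMeasure mu) (hsub : PanSubadditive mu)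
    {E : Set X} (hE : MeasurableSet E)
    (p q : ℝ) (hp : 1 < p) (hq : 1 < q) (hpq : 1 / p + 1 / q = 1)
    (f g : X → ℝ) (hf : Measurable f) (hg : Measurable g)
    (hfp : panNorm mu E p f < ⊤) (hgq : panNorm mu E q g < ⊤) :
    panNorm mu E 1 (fun x => f x * g x) ≤ panNorm mu E p f * panNorm mu E q g := by
  have hp0 : (0:ℝ) < p := by linarith
  have hq0 : (0:ℝ) < q := by linarith
  have hconj : Real.HolderConjugate p q := Real.holderConjugate_iff.mpr ⟨hp, by rw [← one_div, ← one_div]; exact hpq⟩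
  simp only [panNorm] at hfp hgq ⊢
  set F : X → ℝ≥0∞ := fun x => ENNReal.ofReal (|f x| ^ p) with hFdef
  set G : X → ℝ≥0∞ := fun x => ENNReal.ofReal (|g x| ^ q) with hGdef
  set A := panIntegralOn mu F E with hAdef
  set B := panIntegralOn mu G E with hBdef
  have hA_top : A ≠ ⊤ := by
    intro h
    rw [h, ENNReal.top_rpow_of_pos (by positivity)] at hfp
    exact absurd hfp (lt_irrefl _)
  have hB_top : B ≠ ⊤ := by
    intro h
    rw [h, ENNReal.top_rpow_of_pos (by positivity)] at hgq
    exact absurd hgq (lt_irrefl _)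
  set L := panIntegralOn mu (fun x => ENNReal.ofReal |f x * g x|) E with hLdef
  -- reduce the LHS
  have hLHS : (panIntegralOn mu (fun x => ENNReal.ofReal (|f x * g x| ^ (1:ℝ))) E) ^ (1/(1:ℝ))
      = L := by
    simp [Real.rpow_one, -abs_mul, hLdef]
  rw [hLHS]
  -- measurability
  have hFmeas : Measurable F := by
    exact ENNReal.measurable_ofReal.comp
      (((Real.continuous_rpow_const hp0.le).measurable).comp hf.abs)
  -- key estimate for every t > 0
  have key : ∀ t : ℝ, 0 < t →
      L ≤ ENNReal.ofReal (t^p/p) * A + ENNReal.ofReal (t^(-q)/q) * B := by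
    intro t ht0
    have htne : t ≠ 0 := ht0.ne'
    set c1 : ℝ≥0 := (t^p/p).toNNReal with hc1def
    set c2 : ℝ≥0 := (t^(-q)/q).toNNReal with hc2def
    have hc1 : (c1 : ℝ≥0∞) = ENNReal.ofReal (t^p/p) := rfl
    have hc2 : (c2 : ℝ≥0∞) = ENNReal.ofReal (t^(-q)/q) := rfl
    have hc10 : c1 ≠ 0 := by
      simp only [hc1def, ne_eq, Real.toNNReal_eq_zero, not_le]
      positivity
    have hc20 : c2 ≠ 0 := by
      simp only [hc2def, ne_eq, Real.toNNReal_eq_zero, not_le]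
      positivity
    have hpoint : ∀ x, E.indicator (fun x => ENNReal.ofReal |f x * g x|) x
        ≤ (c1 : ℝ≥0∞) * E.indicator F x + (c2 : ℝ≥0∞) * E.indicator G x := by
      intro x
      by_cases hx : x ∈ E
      · simp only [Set.indicator_of_mem hx]
        have hyoung : |f x * g x| ≤ t^p/p * |f x|^p + t^(-q)/q * |g x|^q := by
          have h0 : |f x * g x| = (t*|f x|) * (|g x|/t) := by
            rw [abs_mul]; field_simp
          calc |f x * g x| = (t*|f x|) * (|g x|/t) := h0
            _ ≤ (t*|f x|)^p/p + (|g x|/t)^q/q :=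
                Real.young_inequality_of_nonneg (by positivity) (by positivity) hconj
            _ = t^p/p * |f x|^p + t^(-q)/q * |g x|^q := by
                rw [Real.mul_rpow ht0.le (abs_nonneg _), Real.div_rpow (abs_nonneg _) ht0.le,
                  Real.rpow_neg ht0.le]
                ring
        calc ENNReal.ofReal |f x * g x|
            ≤ ENNReal.ofReal (t^p/p * |f x|^p + t^(-q)/q * |g x|^q) :=
              ENNReal.ofReal_le_ofReal hyoung
          _ = ENNReal.ofReal (t^p/p) * ENNReal.ofReal (|f x|^p)
              + ENNReal.ofReal (t^(-q)/q) * ENNReal.ofReal (|g x|^q) := by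
              rw [ENNReal.ofReal_add (by positivity) (by positivity),
                ENNReal.ofReal_mul (by positivity), ENNReal.ofReal_mul (by positivity)]
          _ = (c1 : ℝ≥0∞) * F x + (c2 : ℝ≥0∞) * G x := by rw [hc1, hc2]
      · simp [Set.indicator_of_notMem hx]
    calc L ≤ panIntegral mu (fun x => (c1 : ℝ≥0∞) * E.indicator F x
          + (c2 : ℝ≥0∞) * E.indicator G x) := panIntegral_mono hpoint
      _ ≤ panIntegral mu (fun x => (c1 : ℝ≥0∞) * E.indicator F x)
          + panIntegral mu (fun x => (c2 : ℝ≥0∞) * E.indicator G x) :=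
          panIntegral_add_le hmu hsub (measurable_const.mul (hFmeas.indicator hE))
      _ ≤ (c1 : ℝ≥0∞) * panIntegral mu (E.indicator F)
          + (c2 : ℝ≥0∞) * panIntegral mu (E.indicator G) :=
          add_le_add (panIntegral_smul_le hc10) (panIntegral_smul_le hc20)
      _ = ENNReal.ofReal (t^p/p) * A + ENNReal.ofReal (t^(-q)/q) * B := by
          rw [hc1, hc2]; rfl
  -- final optimization
  set a := A.toReal with hadef
  set b := B.toReal with hbdef
  have ha0 : 0 ≤ a := ENNReal.toReal_nonneg
  have hb0 : 0 ≤ b := ENNReal.toReal_nonneg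
  have hAa : A = ENNReal.ofReal a := (ENNReal.ofReal_toReal hA_top).symm
  have hBb : B = ENNReal.ofReal b := (ENNReal.ofReal_toReal hB_top).symm
  have hgoal : A ^ (1/p) * B ^ (1/q) = ENNReal.ofReal (a^(1/p) * b^(1/q)) := by
    rw [hAa, hBb, ENNReal.ofReal_rpow_of_nonneg ha0 (by positivity),
      ENNReal.ofReal_rpow_of_nonneg hb0 (by positivity),
      ENNReal.ofReal_mul (by positivity)]
  rw [hgoal]
  apply ENNReal.le_of_forall_pos_le_add
  intro ε hε _
  obtain ⟨t, ht0, hle⟩ := holder_real_opt hp hq hpq ha0 hb0 (ε := (ε:ℝ)) (by exact_mod_cast hε)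
  calc L ≤ ENNReal.ofReal (t^p/p) * A + ENNReal.ofReal (t^(-q)/q) * B := key t ht0
    _ = ENNReal.ofReal (t^p/p * a + t^(-q)/q * b) := by
        rw [hAa, hBb, ← ENNReal.ofReal_mul (by positivity), ← ENNReal.ofReal_mul (by positivity),
          ENNReal.ofReal_add (by positivity) (by positivity)]
    _ ≤ ENNReal.ofReal (a^(1/p) * b^(1/q) + (ε:ℝ)) := ENNReal.ofReal_le_ofReal hle
    _ = ENNReal.ofReal (a^(1/p) * b^(1/q)) + ENNReal.ofReal (ε:ℝ) :=
        ENNReal.ofReal_add (by positivity) (by positivity)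
    _ = ENNReal.ofReal (a^(1/p) * b^(1/q)) + ε := by rw [ENNReal.ofReal_coe_nnreal]
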